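/- The triangle T with vertices (0,0), (k,2k), (2k,k) has minimal lattice width ω(T) = 2k and area (3/2)k², so the bound area ≥ (3/8) ω² is attained with equality. -/

import Mathlib

open Finset Set MeasureTheory

/-- Embedding of lattice points into the real plane. -/
def toR (p : ℤ × ℤ) : ℝ × ℝ := ((p.1 : ℝ), (p.2 : ℝ))

/-- Integer pairing `u ⋅ p`. -/
def zdot (u p : ℤ × ℤ) : ℤ := u.1 * p.1 + u.2 * p.2

/-- The lattice width of the lattice polygon with vertex set `S` in the direction `u`. -/
def widthZ (u : ℤ × ℤ) (S : Finset (ℤ × ℤ)) (h : S.Nonempty) : ℤ :=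
  S.sup' h (zdot u) - S.inf' h (zdot u)

/-- The Euclidean area of the convex hull of the lattice points `S`. -/
noncomputable def areaOf (S : Finset (ℤ × ℤ)) : ℝ :=
  (volume (convexHull ℝ (toR '' (S : Set (ℤ × ℤ))))).toReal

/-- The closed corner triangle with vertices `(0,0)`, `(1,0)`, `(0,1)`. -/
def T0 : Set (ℝ × ℝ) := {p | 0 ≤ p.1 ∧ 0 ≤ p.2 ∧ p.1 + p.2 ≤ 1}

lemma convexT0 : Convex ℝ T0 := by
  intro p hp q hq a b ha hb hab
  obtain ⟨h1,h2,h3⟩ := hp; obtain ⟨h4,h5,h6⟩ := hq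
  refine ⟨?_, ?_, ?_⟩ <;> simp [T0, Prod.fst_add, Prod.smul_fst] <;> nlinarith

lemma hull_eq : convexHull ℝ {((0:ℝ),(0:ℝ)), ((1:ℝ),(0:ℝ)), ((0:ℝ),(1:ℝ))} = T0 := by
  apply le_antisymm
  · apply convexHull_min _ convexT0
    rintro p (rfl|rfl|rfl) <;> simp [T0]
  · rintro ⟨x, y⟩ ⟨h1, h2, h3⟩
    rw [show ({((0:ℝ),(0:ℝ)), ((1:ℝ),(0:ℝ)), ((0:ℝ),(1:ℝ))} : Set (ℝ×ℝ)) =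
        insert ((0:ℝ),(0:ℝ)) {((1:ℝ),(0:ℝ)), ((0:ℝ),(1:ℝ))} from rfl,
      convexHull_insert ⟨_, mem_insert _ _⟩, convexHull_pair, mem_convexJoin]
    rcases eq_or_lt_of_le (by linarith : (0:ℝ) ≤ x + y) with ht | ht
    · have hx : x = 0 := by linarith
      have hy : y = 0 := by linarith
      refine ⟨(0,0), rfl, (1,0), ⟨1, 0, by norm_num, by norm_num, by norm_num, by norm_num⟩,
        1, 0, by norm_num, by norm_num, by norm_num, by simp [hx, hy, Prod.ext_iff]⟩
    · set t := x + y with htdef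
      refine ⟨(0,0), rfl, (x/t, y/t),
        ⟨x/t, y/t, by positivity, by positivity, by field_simp; linarith, by simp [Prod.ext_iff]⟩,
        1 - t, t, by linarith, by linarith, by ring, ?_⟩
      simp only [Prod.smul_mk, smul_eq_mul, Prod.mk_add_mk, Prod.ext_iff]
      constructor <;> field_simp <;> ring

lemma T0_meas : MeasurableSet T0 := by
  have : T0 = {p : ℝ×ℝ | 0 ≤ p.1} ∩ ({p | 0 ≤ p.2} ∩ {p | p.1 + p.2 ≤ 1}) := rfl
  rw [this]
  exact (measurableSet_le measurable_const measurable_fst).inter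
    ((measurableSet_le measurable_const measurable_snd).inter
     (measurableSet_le (measurable_fst.add measurable_snd) measurable_const))

lemma volT0 : volume T0 = ENNReal.ofReal (1/2 : ℝ) := by
  rw [Measure.volume_eq_prod, Measure.prod_apply T0_meas]
  have hslice : ∀ x : ℝ, (Prod.mk x ⁻¹' T0) = if 0 ≤ x then Icc 0 (1-x) else ∅ := by
    intro x
    split_ifs with hx
    · ext y; simp [T0, hx, Set.mem_Icc]; intro _; constructor <;> intro <;> linarith
    · ext y; simp [T0]; intro h; exact absurd h hx
  have : (fun x => volume (Prod.mk x ⁻¹' T0)) =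
      (Icc (0:ℝ) 1).indicator (fun x => ENNReal.ofReal (1-x)) := by
    funext x
    rw [hslice x]
    rcases le_or_gt 0 x with hx | hx
    · rcases le_or_gt x 1 with hx1 | hx1
      · simp [hx, Real.volume_Icc, indicator_of_mem (Set.mem_Icc.2 ⟨hx, hx1⟩)]
      · simp [hx, Real.volume_Icc,
          indicator_of_notMem (by simp [Set.mem_Icc]; intro; linarith : x ∉ Icc (0:ℝ) 1),
          ENNReal.ofReal_eq_zero.2 (by linarith : 1 - x ≤ 0)]
    · simp [not_le.2 hx,
        indicator_of_notMem (by simp [Set.mem_Icc]; intro; linarith : x ∉ Icc (0:ℝ) 1)]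
  rw [this, lintegral_indicator measurableSet_Icc]
  rw [← ofReal_integral_eq_lintegral_ofReal]
  · congr 1
    rw [integral_Icc_eq_integral_Ioc, ← intervalIntegral.integral_of_le (by norm_num : (0:ℝ) ≤ 1)]
    rw [intervalIntegral.integral_sub intervalIntegrable_const intervalIntegral.intervalIntegrable_id]
    simp
    norm_num
  · apply ContinuousOn.integrableOn_compact isCompact_Icc
    exact (continuous_const.sub continuous_id).continuousOn
  · filter_upwards [ae_restrict_mem measurableSet_Icc] with x hx
    simp only [Set.mem_Icc] at hx
    simpa using sub_nonneg.2 hx.2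

/-- The linear map sending the corner triangle to the triangle `(0,0), (k,2k), (2k,k)`. -/
noncomputable def Lk (k : ℝ) : (ℝ × ℝ) →ₗ[ℝ] (ℝ × ℝ) where
  toFun p := (k * p.1 + 2 * k * p.2, 2 * k * p.1 + k * p.2)
  map_add' p q := by simp [Prod.ext_iff]; constructor <;> ring
  map_smul' c p := by simp [Prod.ext_iff, smul_eq_mul]; constructor <;> ring

lemma det_Lk (k : ℝ) : LinearMap.det (Lk k) = -3 * k ^ 2 := by
  rw [← LinearMap.det_toMatrix (Module.Basis.finTwoProd ℝ), Matrix.det_fin_two]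
  simp [LinearMap.toMatrix_apply, Lk, Module.Basis.finTwoProd]
  ring

lemma spread_aux (K a b : ℤ) (hK : 1 ≤ K) (h : ¬(a = 0 ∧ b = 0)) :
    2 * K ≤ max (max 0 (a * K + b * (2 * K))) (a * (2 * K) + b * K) -
      min (min 0 (a * K + b * (2 * K))) (a * (2 * K) + b * K) := by
  have h1 : a * K + b * (2 * K) = K * (a + 2 * b) := by ring
  have h2 : a * (2 * K) + b * K = K * (2 * a + b) := by ring
  have hK0 : (0:ℤ) ≤ K := by linarith
  rw [h1, h2, show (0:ℤ) = K * 0 by ring,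
    ← mul_max_of_nonneg _ _ hK0, ← mul_max_of_nonneg _ _ hK0,
    ← mul_min_of_nonneg _ _ hK0, ← mul_min_of_nonneg _ _ hK0, ← mul_sub]
  have key : 2 ≤ max (max 0 (a + 2 * b)) (2 * a + b) - min (min 0 (a + 2 * b)) (2 * a + b) := by
    omega
  calc 2 * K = K * 2 := by ring
    _ ≤ _ := mul_le_mul_of_nonneg_left key hK0

theorem triangle_extremal (k : ℕ) (hk : 0 < k)
    (S : Finset (ℤ × ℤ)) (hS : S = {((0 : ℤ), (0 : ℤ)), ((k : ℤ), (2 * k : ℤ)), ((2 * k : ℤ), (k : ℤ))})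
    (h : S.Nonempty) :
    (∀ u : ℤ × ℤ, u ≠ 0 → (2 * k : ℤ) ≤ widthZ u S h) ∧
    (∃ u : ℤ × ℤ, u ≠ 0 ∧ widthZ u S h = (2 * k : ℤ)) ∧
    areaOf S = (3 / 2 : ℝ) * (k : ℝ) ^ 2 ∧
    areaOf S = (3 / 8 : ℝ) * (2 * (k : ℝ)) ^ 2 := by
  subst hS
  have hK1 : (1:ℤ) ≤ (k:ℤ) := by exact_mod_cast hk
  have hwidth : ∀ u : ℤ × ℤ,
      widthZ u ({((0 : ℤ), (0 : ℤ)), ((k : ℤ), (2 * k : ℤ)), ((2 * k : ℤ), (k : ℤ))}) h =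
        max (max 0 (u.1 * k + u.2 * (2 * k))) (u.1 * (2 * k) + u.2 * k) -
        min (min 0 (u.1 * k + u.2 * (2 * k))) (u.1 * (2 * k) + u.2 * k) := by
    intro u
    unfold widthZ zdot
    rw [Finset.sup'_insert, Finset.sup'_insert, Finset.sup'_singleton,
      Finset.inf'_insert, Finset.inf'_insert, Finset.inf'_singleton]
    simp only
    omega
    all_goals simp
  have harea : areaOf ({((0 : ℤ), (0 : ℤ)), ((k : ℤ), (2 * k : ℤ)), ((2 * k : ℤ), (k : ℤ))} :
      Finset (ℤ × ℤ)) = (3 / 2 : ℝ) * (k : ℝ) ^ 2 := by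
    have himg : toR '' (({((0 : ℤ), (0 : ℤ)), ((k : ℤ), (2 * k : ℤ)), ((2 * k : ℤ), (k : ℤ))} :
        Finset (ℤ × ℤ)) : Set (ℤ × ℤ)) =
        Lk (k:ℝ) '' {((0:ℝ),(0:ℝ)), ((1:ℝ),(0:ℝ)), ((0:ℝ),(1:ℝ))} := by
      rw [show ({((0:ℝ),(0:ℝ)), ((1:ℝ),(0:ℝ)), ((0:ℝ),(1:ℝ))} : Set (ℝ×ℝ)) =
          insert ((0:ℝ),(0:ℝ)) (insert ((1:ℝ),(0:ℝ)) {((0:ℝ),(1:ℝ))}) from rfl]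
      simp only [Finset.coe_insert, Finset.coe_singleton, image_insert_eq, Set.image_singleton,
        toR, Lk, LinearMap.coe_mk, AddHom.coe_mk]
      push_cast
      norm_num
    rw [areaOf, himg, ← LinearMap.image_convexHull, hull_eq,
      Measure.addHaar_image_linearMap volume (Lk (k:ℝ)) T0, volT0, det_Lk]
    rw [← ENNReal.ofReal_mul (by positivity)]
    rw [ENNReal.toReal_ofReal (by positivity)]
    rw [abs_of_nonpos (by nlinarith : (-3:ℝ) * (k:ℝ)^2 ≤ 0)]
    ring
  refine ⟨?_, ?_, ?_, ?_⟩
  · intro u hu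
    rw [hwidth u]
    apply spread_aux _ _ _ hK1
    rintro ⟨ha, hb⟩
    exact hu (Prod.ext ha hb)
  · refine ⟨(1, -1), by simp [Prod.ext_iff], ?_⟩
    rw [hwidth (1, -1)]
    simp only
    omega
  · exact harea
  · rw [harea]; ring
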